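/- Let r ≥ 2 be an integer and let m be a unit of ZMod r. Then the multiset of integers { 1 + i + ((−m⁻¹·(i+1) : ZMod r)).val : i = 0, 1, …, r−2 } coincides with the multiset { 1 + i + ((−m·(i+1) : ZMod r)).val : i = 0, 1, …, r−2 }; that is, the multiset of path lengths W̃(r;(1,m)) equals W̃(r;(1,m⁻¹)). -/

import Mathlib

theorem stmt_16 (r : ℕ) (hr : 2 ≤ r) (m : ZMod r) (hm : IsUnit m) :
    (Multiset.range (r - 1)).map
        (fun i : ℕ => 1 + i + (-m⁻¹ * ((i : ZMod r) + 1)).val) =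
      (Multiset.range (r - 1)).map
        (fun i : ℕ => 1 + i + (-m * ((i : ZMod r) + 1)).val) := by
  haveI : NeZero r := ⟨by omega⟩
  set f : ℕ → ℕ := fun i : ℕ => 1 + i + (-m⁻¹ * ((i : ZMod r) + 1)).val with hf
  set σ : ℕ → ℕ := fun i : ℕ => (-m * ((i : ZMod r) + 1)).val - 1 with hσ
  have hinv : m⁻¹ * m = 1 := ZMod.inv_mul_of_unit m hm
  -- basic facts for i < r - 1
  have hx : ∀ i : ℕ, i < r - 1 → ((i : ZMod r) + 1) ≠ 0 := by
    intro i hi h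
    have hc : ((i : ZMod r) + 1) = ((i + 1 : ℕ) : ZMod r) := by push_cast; ring
    rw [hc] at h
    have := congrArg ZMod.val h
    rw [ZMod.val_cast_of_lt (by omega), ZMod.val_zero] at this
    omega
  have hne : ∀ i : ℕ, i < r - 1 → (-m * ((i : ZMod r) + 1)) ≠ 0 := by
    intro i hi h
    apply hx i hi
    have h2 : (-m⁻¹) * (-m * ((i : ZMod r) + 1)) = (m⁻¹ * m) * ((i : ZMod r) + 1) := by
      ring
    rw [h, mul_zero, hinv, one_mul] at h2
    exact h2.symm
  have hvpos : ∀ i : ℕ, i < r - 1 → 1 ≤ (-m * ((i : ZMod r) + 1)).val := by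
    intro i hi
    have := (ZMod.val_eq_zero _).not.mpr (hne i hi)
    omega
  have hσlt : ∀ i : ℕ, i < r - 1 → σ i < r - 1 := by
    intro i hi
    have h1 := hvpos i hi
    have h2 := ZMod.val_lt (-m * ((i : ZMod r) + 1))
    simp only [hσ]; omega
  have hcastσ : ∀ i : ℕ, i < r - 1 →
      ((σ i : ZMod r) + 1) = -m * ((i : ZMod r) + 1) := by
    intro i hi
    have h1 := hvpos i hi
    have : ((σ i : ZMod r) + 1) = (((σ i + 1 : ℕ)) : ZMod r) := by push_cast; ring
    rw [this]
    have hσ1 : σ i + 1 = (-m * ((i : ZMod r) + 1)).val := by simp only [hσ]; omega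
    rw [hσ1, ZMod.natCast_val, ZMod.cast_id]
  have hfσ : ∀ i : ℕ, i < r - 1 →
      f (σ i) = 1 + i + (-m * ((i : ZMod r) + 1)).val := by
    intro i hi
    have h1 := hvpos i hi
    have h2 : (-m⁻¹ * ((σ i : ZMod r) + 1)) = ((i : ZMod r) + 1) := by
      rw [hcastσ i hi]
      have : -m⁻¹ * (-m * ((i : ZMod r) + 1)) = (m⁻¹ * m) * ((i : ZMod r) + 1) := by ring
      rw [this, hinv, one_mul]
    simp only [hf, h2]
    have hval : ((i : ZMod r) + 1).val = i + 1 := by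
      have hc : ((i : ZMod r) + 1) = ((i + 1 : ℕ) : ZMod r) := by push_cast; ring
      rw [hc, ZMod.val_cast_of_lt (by omega)]
    rw [hval]
    simp only [hσ]; omega
  -- σ is injective on range (r-1)
  have hinj : ∀ i ∈ Multiset.range (r - 1), ∀ j ∈ Multiset.range (r - 1),
      σ i = σ j → i = j := by
    intro i hi j hj h
    rw [Multiset.mem_range] at hi hj
    have h1 := hvpos i hi
    have h2 := hvpos j hj
    have hval : (-m * ((i : ZMod r) + 1)).val = (-m * ((j : ZMod r) + 1)).val := by
      simp only [hσ] at h; omega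
    have heq : (-m * ((i : ZMod r) + 1)) = -m * ((j : ZMod r) + 1) :=
      ZMod.val_injective r hval
    have : ((i : ZMod r) + 1) = ((j : ZMod r) + 1) := by
      have h3 := congrArg (fun x => (-m⁻¹) * x) heq
      have e1 : -m⁻¹ * (-m * ((i : ZMod r) + 1)) = (m⁻¹ * m) * ((i : ZMod r) + 1) := by ring
      have e2 : -m⁻¹ * (-m * ((j : ZMod r) + 1)) = (m⁻¹ * m) * ((j : ZMod r) + 1) := by ring
      rw [e1, e2, hinv, one_mul, one_mul] at h3
      exact h3
    have hci : ((i : ZMod r) + 1) = ((i + 1 : ℕ) : ZMod r) := by push_cast; ring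
    have hcj : ((j : ZMod r) + 1) = ((j + 1 : ℕ) : ZMod r) := by push_cast; ring
    rw [hci, hcj] at this
    have := congrArg ZMod.val this
    rw [ZMod.val_cast_of_lt (by omega), ZMod.val_cast_of_lt (by omega)] at this
    omega
  -- map σ over range is range
  have hperm : (Multiset.range (r - 1)).map σ = Multiset.range (r - 1) := by
    have hnodup : ((Multiset.range (r - 1)).map σ).Nodup :=
      (Multiset.nodup_range _).map_on hinj
    have hsub : ((Multiset.range (r - 1)).map σ) ⊆ Multiset.range (r - 1) := by
      intro x hx'
      rw [Multiset.mem_map] at hx'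
      obtain ⟨i, hi, rfl⟩ := hx'
      rw [Multiset.mem_range] at hi ⊢
      exact hσlt i hi
    have hle := (Multiset.le_iff_subset hnodup).mpr hsub
    exact Multiset.eq_of_le_of_card_le hle (by simp)
  calc (Multiset.range (r - 1)).map f
      = ((Multiset.range (r - 1)).map σ).map f := by rw [hperm]
    _ = (Multiset.range (r - 1)).map (f ∘ σ) := by rw [Multiset.map_map]
    _ = (Multiset.range (r - 1)).map
        (fun i : ℕ => 1 + i + (-m * ((i : ZMod r) + 1)).val) := by
        apply Multiset.map_congr rfl
        intro i hi
        exact hfσ i (Multiset.mem_range.mp hi)
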